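/- Let x₁, x₂, x₃ be real numbers with 0 < x₁ < x₂ < x₃, and consider the four statements: (P1) x₁² + x₂² + x₃² = 3/2; (P2) x₁⁴ + x₂⁴ + x₃⁴ = 9/8; (P3) x₁ + x₂ − x₃ = 0; (P4) x₁² + x₁x₂ + x₂² = 3/4. If at least two of P1, P2, P3, P4 hold, then all four hold. -/
import Mathlib


/-- Lemma 5.1: for reals `0 < x₁ < x₂ < x₃`, any two of the four statements
P1: `x₁² + x₂² + x₃² = 3/2`, P2: `x₁⁴ + x₂⁴ + x₃⁴ = 9/8`,
P3: `x₁ + x₂ − x₃ = 0`, P4: `x₁² + x₁x₂ + x₂² = 3/4` imply the other two. -/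
theorem stmt_13 (x₁ x₂ x₃ : ℝ) (h0 : 0 < x₁) (h12 : x₁ < x₂) (h23 : x₂ < x₃)
    (P1 : Prop) (P2 : Prop) (P3 : Prop) (P4 : Prop)
    (hP1 : P1 ↔ x₁ ^ 2 + x₂ ^ 2 + x₃ ^ 2 = 3 / 2)
    (hP2 : P2 ↔ x₁ ^ 4 + x₂ ^ 4 + x₃ ^ 4 = 9 / 8)
    (hP3 : P3 ↔ x₁ + x₂ - x₃ = 0)
    (hP4 : P4 ↔ x₁ ^ 2 + x₁ * x₂ + x₂ ^ 2 = 3 / 4)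
    (h : (P1 ∧ P2) ∨ (P1 ∧ P3) ∨ (P1 ∧ P4) ∨ (P2 ∧ P3) ∨ (P2 ∧ P4) ∨ (P3 ∧ P4)) :
    P1 ∧ P2 ∧ P3 ∧ P4 := by
  rw [hP1, hP2, hP3, hP4] at *
  have hb : 0 < x₂ := h0.trans h12
  have hc : 0 < x₃ := hb.trans h23
  have sqtrick : x₃ ^ 2 = (x₁ + x₂) ^ 2 → x₁ + x₂ - x₃ = 0 := by
    intro hsq
    have hf : (x₃ - (x₁ + x₂)) * (x₃ + (x₁ + x₂)) = 0 := by linear_combination hsq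
    rcases mul_eq_zero.1 hf with h' | h'
    · linarith
    · linarith
  have key : (x₁ + x₂ - x₃ = 0) ∧ (x₁ ^ 2 + x₁ * x₂ + x₂ ^ 2 = 3 / 4) := by
    rcases h with ⟨h1, h2⟩ | ⟨h1, h3⟩ | ⟨h1, h4⟩ | ⟨h2, h3⟩ | ⟨h2, h4⟩ | ⟨h3, h4⟩
    · -- P1 ∧ P2
      have hc4 : x₃ ^ 4 = (3/2 - x₁ ^ 2 - x₂ ^ 2) ^ 2 := by
        have hx : x₃ ^ 2 = 3/2 - x₁ ^ 2 - x₂ ^ 2 := by linarith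
        rw [show x₃ ^ 4 = (x₃ ^ 2) ^ 2 by ring, hx]
      have hfac : (x₁ * x₂ + x₁ ^ 2 + x₂ ^ 2 - 3/4) *
          (x₁ * x₂ - x₁ ^ 2 - x₂ ^ 2 + 3/4) = 0 := by
        linear_combination (-1/2) * h2 + (1/2) * hc4
      rcases mul_eq_zero.1 hfac with h' | h'
      · have e4 : x₁ ^ 2 + x₁ * x₂ + x₂ ^ 2 = 3 / 4 := by linarith
        exact ⟨sqtrick (by linear_combination h1 - 2 * e4), e4⟩
      · exfalso
        have h1' : x₂ ^ 2 < x₃ ^ 2 := by nlinarith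
        nlinarith [mul_pos h0 hb, mul_pos h0 h0]
    · -- P1 ∧ P3
      have hx : x₃ = x₁ + x₂ := by linarith
      subst hx
      exact ⟨h3, by linear_combination (1/2) * h1⟩
    · -- P1 ∧ P4
      exact ⟨sqtrick (by linear_combination h1 - 2 * h4), h4⟩
    · -- P2 ∧ P3
      have hx : x₃ = x₁ + x₂ := by linarith
      subst hx
      refine ⟨h3, ?_⟩
      have hfac : (x₁ ^ 2 + x₁ * x₂ + x₂ ^ 2 - 3/4) *
          (x₁ ^ 2 + x₁ * x₂ + x₂ ^ 2 + 3/4) = 0 := by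
        linear_combination (1/2) * h2
      rcases mul_eq_zero.1 hfac with h' | h'
      · linarith
      · nlinarith [mul_pos h0 hb]
    · -- P2 ∧ P4
      refine ⟨?_, h4⟩
      have h4' : x₃ ^ 4 = (x₁ + x₂) ^ 4 := by
        linear_combination h2 - (2 * (x₁ ^ 2 + x₁ * x₂ + x₂ ^ 2) + 3/2) * h4
      have hf : (x₃ ^ 2 - (x₁ + x₂) ^ 2) * (x₃ ^ 2 + (x₁ + x₂) ^ 2) = 0 := by
        linear_combination h4'
      rcases mul_eq_zero.1 hf with h' | h'
      · exact sqtrick (by linarith)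
      · exfalso
        have h1' : 0 < x₃ ^ 2 := by positivity
        nlinarith [sq_nonneg (x₁ + x₂)]
    · exact ⟨h3, h4⟩
  obtain ⟨e3, e4⟩ := key
  have hx : x₃ = x₁ + x₂ := by linarith
  subst hx
  exact ⟨by linear_combination 2 * e4,
    by linear_combination (2 * (x₁ ^ 2 + x₁ * x₂ + x₂ ^ 2) + 3/2) * e4, e3, e4⟩
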